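/- For q ∈ (0,1], σ > 0, integer α ≥ 2, and the mixture μ = (1-q)N(0,σ²) + qN(1,σ²), it holds that max(A_α, B_α) with A_α = E_{z∼μ₀}[(μ(z)/μ₀(z))^α] and B_α = E_{z∼μ}[(μ₀(z)/μ(z))^α] satisfies A_α ≥ B_α, where μ₀ = N(0,σ²). -/

import Mathlib

open Real MeasureTheory Finset


lemma pair_key (P Q : ℝ) (hQ : 0 ≤ Q) (hQP : Q ≤ P) (hPQ : 1 ≤ P * Q) (i k : ℕ) :
    P ^ (i + k) * Q ^ i + P ^ (i + k) * Q ^ (i + 2 * k)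
      ≤ Q ^ (i + k) * P ^ i + Q ^ (i + k) * P ^ (i + 2 * k) := by
  have hP : 0 ≤ P := hQ.trans hQP
  have h1 : Q ^ k ≤ P ^ k := pow_le_pow_left₀ hQ hQP k
  have h2 : 1 ≤ P ^ k * Q ^ k := by rw [← mul_pow]; exact one_le_pow₀ hPQ
  have h3 : 0 ≤ P ^ i * Q ^ i := mul_nonneg (pow_nonneg hP i) (pow_nonneg hQ i)
  have key : 0 ≤ (P ^ k - Q ^ k) * (P ^ k * Q ^ k - 1) * (P ^ i * Q ^ i) :=
    mul_nonneg (mul_nonneg (by linarith) (by linarith)) h3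
  have e : Q ^ (i + k) * P ^ i + Q ^ (i + k) * P ^ (i + 2 * k)
      - (P ^ (i + k) * Q ^ i + P ^ (i + k) * Q ^ (i + 2 * k))
      = (P ^ k - Q ^ k) * (P ^ k * Q ^ k - 1) * (P ^ i * Q ^ i) := by ring
  linarith

lemma sum_key (P Q : ℝ) (hQ : 0 ≤ Q) (hQP : Q ≤ P) (hPQ : 1 ≤ P * Q) (t : ℕ) :
    ∑ i ∈ range (2 * t + 1), P ^ t * Q ^ i ≤ ∑ i ∈ range (2 * t + 1), Q ^ t * P ^ i := by
  have pairwise : ∀ i ∈ range (2 * t + 1),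
      P ^ t * Q ^ i + P ^ t * Q ^ (2 * t - i) ≤ Q ^ t * P ^ i + Q ^ t * P ^ (2 * t - i) := by
    intro i hi
    have hi' : i ≤ 2 * t := by simpa [Nat.lt_succ_iff] using hi
    rcases le_total i t with h | h
    · obtain ⟨k, rfl⟩ : ∃ k, t = i + k := ⟨t - i, by omega⟩
      have h2 : 2 * (i + k) - i = i + 2 * k := by omega
      rw [h2]
      exact pair_key P Q hQ hQP hPQ i k
    · obtain ⟨k, hk⟩ : ∃ k, i = t + k := ⟨i - t, by omega⟩
      have hkt : k ≤ t := by omega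
      obtain ⟨j, rfl⟩ : ∃ j, t = j + k := ⟨t - k, by omega⟩
      have h2 : 2 * (j + k) - i = j := by omega
      rw [h2, hk]
      have h3 : j + k + k = j + 2 * k := by omega
      rw [h3]
      linarith [pair_key P Q hQ hQP hPQ j k]
  -- sum of reflections
  have hrefl : ∀ (R S : ℝ), ∑ i ∈ range (2 * t + 1), R ^ t * S ^ (2 * t - i)
      = ∑ i ∈ range (2 * t + 1), R ^ t * S ^ i := by
    intro R S
    have := Finset.sum_range_reflect (fun i => R ^ t * S ^ i) (2 * t + 1)
    simpa using this
  have h2 : ∑ i ∈ range (2 * t + 1), (P ^ t * Q ^ i + P ^ t * Q ^ (2 * t - i))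
      ≤ ∑ i ∈ range (2 * t + 1), (Q ^ t * P ^ i + Q ^ t * P ^ (2 * t - i)) :=
    Finset.sum_le_sum pairwise
  rw [Finset.sum_add_distrib, Finset.sum_add_distrib, hrefl P Q, hrefl Q P] at h2
  linarith

lemma pow_key_aux (P Q Er : ℝ) (hP : 0 < P) (hQ : 0 < Q) (hE : 0 < Er)
    (hPQ : 1 ≤ P * Q) (hrel : P + Er * Q = 1 + Er) (hQP : Q ≤ P) (t : ℕ) :
    P⁻¹ ^ t + Er * Q⁻¹ ^ t ≤ P ^ (t + 1) + Er * Q ^ (t + 1) := by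
  have hP1 : 1 ≤ P := by nlinarith
  have hEr1 : Er * (1 - Q) = P - 1 := by linarith
  have hsum := sum_key P Q hQ.le hQP hPQ t
  set SP : ℝ := ∑ i ∈ Finset.range (2 * t + 1), P ^ i with hSP
  set SQ : ℝ := ∑ i ∈ Finset.range (2 * t + 1), Q ^ i with hSQ
  have hgP : (P - 1) * SP = P ^ (2 * t + 1) - 1 := by
    rw [hSP, mul_comm]; exact geom_sum_mul P (2 * t + 1)
  have hgQ : (1 - Q) * SQ = 1 - Q ^ (2 * t + 1) := by
    have := geom_sum_mul Q (2 * t + 1)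
    rw [hSQ]; nlinarith [this]
  have hsum' : P ^ t * SQ ≤ Q ^ t * SP := by
    rw [hSP, hSQ, Finset.mul_sum, Finset.mul_sum]; exact hsum
  have hstep : 0 ≤ Q ^ t * (P ^ (2 * t + 1) - 1) - Er * (P ^ t * (1 - Q ^ (2 * t + 1))) := by
    have e : Q ^ t * (P ^ (2 * t + 1) - 1) - Er * (P ^ t * (1 - Q ^ (2 * t + 1)))
        = Q ^ t * ((P - 1) * SP) - Er * (P ^ t * ((1 - Q) * SQ)) := by rw [hgP, hgQ]
    rw [e]
    have e2 : Q ^ t * ((P - 1) * SP) - Er * (P ^ t * ((1 - Q) * SQ))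
        = (P - 1) * (Q ^ t * SP - P ^ t * SQ) := by
      have : Er * (P ^ t * ((1 - Q) * SQ)) = (Er * (1 - Q)) * (P ^ t * SQ) := by ring
      rw [this, hEr1]; ring
    rw [e2]
    exact mul_nonneg (by linarith) (by linarith)
  have hPt : (0:ℝ) < P ^ t := pow_pos hP t
  have hQt : (0:ℝ) < Q ^ t := pow_pos hQ t
  have expand : (P ^ (t + 1) + Er * Q ^ (t + 1)) * (P ^ t * Q ^ t)
      - (P⁻¹ ^ t + Er * Q⁻¹ ^ t) * (P ^ t * Q ^ t)
      = Q ^ t * (P ^ (2 * t + 1) - 1) - Er * (P ^ t * (1 - Q ^ (2 * t + 1))) := by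
    rw [inv_pow, inv_pow]
    field_simp
    ring
  nlinarith [mul_pos hPt hQt, hstep, expand]

lemma pow_key (P Q Er : ℝ) (hP : 0 < P) (hQ : 0 < Q) (hE : 0 < Er)
    (hPQ : 1 ≤ P * Q) (hrel : P + Er * Q = 1 + Er) (t : ℕ) :
    P⁻¹ ^ t + Er * Q⁻¹ ^ t ≤ P ^ (t + 1) + Er * Q ^ (t + 1) := by
  rcases le_total Q P with h | h
  · exact pow_key_aux P Q Er hP hQ hE hPQ hrel h t
  · have hE' : 0 < Er⁻¹ := by positivity
    have hPQ' : 1 ≤ Q * P := by linarith [hPQ, mul_comm P Q]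
    have hrel' : Q + Er⁻¹ * P = 1 + Er⁻¹ := by
      field_simp
      nlinarith [hrel]
    have := pow_key_aux Q P Er⁻¹ hQ hP hE' hPQ' hrel' h t
    have h2 := mul_le_mul_of_nonneg_left this hE.le
    have e1 : Er * (Q⁻¹ ^ t + Er⁻¹ * P⁻¹ ^ t) = Er * Q⁻¹ ^ t + P⁻¹ ^ t := by
      field_simp
    have e2 : Er * (Q ^ (t + 1) + Er⁻¹ * P ^ (t + 1)) = Er * Q ^ (t + 1) + P ^ (t + 1) := by
      field_simp
    rw [e1, e2] at h2
    linarith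

/-- The Gaussian probability density function with mean `m` and variance `σ²`. -/
noncomputable def gpdf (m σ x : ℝ) : ℝ :=
  (Real.sqrt (2 * Real.pi * σ ^ 2))⁻¹ * Real.exp (-(x - m) ^ 2 / (2 * σ ^ 2))

/-- Density of the mixture `(1-q)·N(0,σ²) + q·N(1,σ²)`. -/
noncomputable def mixpdf (q σ z : ℝ) : ℝ := (1 - q) * gpdf 0 σ z + q * gpdf 1 σ z

noncomputable def aE (q σ z : ℝ) : ℝ := (1 - q) + q * Real.exp ((2 * z - 1) / (2 * σ ^ 2))

lemma gpdf_pos (m σ x : ℝ) (hσ : 0 < σ) : 0 < gpdf m σ x := by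
  unfold gpdf
  have : 0 < Real.sqrt (2 * Real.pi * σ ^ 2) :=
    Real.sqrt_pos.mpr (by positivity)
  positivity

lemma gpdf_one_eq (σ z : ℝ) (hσ : 0 < σ) :
    gpdf 1 σ z = Real.exp ((2 * z - 1) / (2 * σ ^ 2)) * gpdf 0 σ z := by
  unfold gpdf
  rw [mul_left_comm, ← Real.exp_add]
  congr 1
  have h : (2 : ℝ) * σ ^ 2 ≠ 0 := by positivity
  field_simp
  ring

lemma mixpdf_eq (q σ z : ℝ) (hσ : 0 < σ) :
    mixpdf q σ z = aE q σ z * gpdf 0 σ z := by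
  unfold mixpdf aE
  rw [gpdf_one_eq σ z hσ]
  ring

lemma aE_pos (q σ z : ℝ) (hq0 : 0 < q) (hq1 : q ≤ 1) : 0 < aE q σ z := by
  unfold aE
  have := Real.exp_pos ((2 * z - 1) / (2 * σ ^ 2))
  nlinarith

lemma gpdf_reflect (σ z : ℝ) (hσ : 0 < σ) :
    gpdf 0 σ (1 - z) = Real.exp ((2 * z - 1) / (2 * σ ^ 2)) * gpdf 0 σ z := by
  unfold gpdf
  rw [mul_left_comm, ← Real.exp_add]
  congr 1
  have h : (2 : ℝ) * σ ^ 2 ≠ 0 := by positivity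
  field_simp
  ring

lemma aE_reflect (q σ z : ℝ) :
    aE q σ (1 - z) = (1 - q) + q * (Real.exp ((2 * z - 1) / (2 * σ ^ 2)))⁻¹ := by
  unfold aE
  rw [← Real.exp_neg]
  congr 3
  ring

lemma integrable_exp_mul_gpdf (σ : ℝ) (hσ : 0 < σ) (β : ℝ) :
    Integrable (fun z => Real.exp (β * z) * gpdf 0 σ z) := by
  have hb : 0 < (2 * σ ^ 2)⁻¹ := by positivity
  have base : Integrable (fun z : ℝ => Real.exp (-(2 * σ ^ 2)⁻¹ * z ^ 2)) :=
    integrable_exp_neg_mul_sq hb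
  have base2 : Integrable (fun z : ℝ => Real.exp (-(2 * σ ^ 2)⁻¹ * (z - β * σ ^ 2) ^ 2)) :=
    base.comp_sub_right (β * σ ^ 2)
  have e : (fun z => Real.exp (β * z) * gpdf 0 σ z)
      = fun z => ((Real.sqrt (2 * Real.pi * σ ^ 2))⁻¹ * Real.exp (β ^ 2 * σ ^ 2 / 2))
          * Real.exp (-(2 * σ ^ 2)⁻¹ * (z - β * σ ^ 2) ^ 2) := by
    funext z
    have h : (σ : ℝ) ^ 2 ≠ 0 := by positivity
    have h2 : Real.exp (β * z) * Real.exp (-(z - 0) ^ 2 / (2 * σ ^ 2))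
        = Real.exp (β ^ 2 * σ ^ 2 / 2) * Real.exp (-(2 * σ ^ 2)⁻¹ * (z - β * σ ^ 2) ^ 2) := by
      rw [← Real.exp_add, ← Real.exp_add]
      congr 1
      field_simp
      ring
    unfold gpdf
    calc Real.exp (β * z) * ((Real.sqrt (2 * Real.pi * σ ^ 2))⁻¹
            * Real.exp (-(z - 0) ^ 2 / (2 * σ ^ 2)))
        = (Real.sqrt (2 * Real.pi * σ ^ 2))⁻¹
            * (Real.exp (β * z) * Real.exp (-(z - 0) ^ 2 / (2 * σ ^ 2))) := by ring
      _ = (Real.sqrt (2 * Real.pi * σ ^ 2))⁻¹ * (Real.exp (β ^ 2 * σ ^ 2 / 2)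
            * Real.exp (-(2 * σ ^ 2)⁻¹ * (z - β * σ ^ 2) ^ 2)) := by rw [h2]
      _ = (Real.sqrt (2 * Real.pi * σ ^ 2))⁻¹ * Real.exp (β ^ 2 * σ ^ 2 / 2)
            * Real.exp (-(2 * σ ^ 2)⁻¹ * (z - β * σ ^ 2) ^ 2) := by ring
  rw [e]
  exact base2.const_mul _

lemma integrable_exp_lin_gpdf (σ : ℝ) (hσ : 0 < σ) (r : ℝ) :
    Integrable (fun z => Real.exp (r * (2 * z - 1) / (2 * σ ^ 2)) * gpdf 0 σ z) := by
  have e : (fun z => Real.exp (r * (2 * z - 1) / (2 * σ ^ 2)) * gpdf 0 σ z)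
      = fun z => Real.exp (-r / (2 * σ ^ 2)) * (Real.exp ((r / σ ^ 2) * z) * gpdf 0 σ z) := by
    funext z
    rw [← mul_assoc, ← Real.exp_add]
    congr 2
    have h : (σ : ℝ) ^ 2 ≠ 0 := by positivity
    field_simp
    ring

  rw [e]
  exact (integrable_exp_mul_gpdf σ hσ (r / σ ^ 2)).const_mul _

lemma integrable_gpdf (σ : ℝ) (hσ : 0 < σ) : Integrable (fun z => gpdf 0 σ z) := by
  have := integrable_exp_mul_gpdf σ hσ 0
  simpa using this

lemma continuous_gpdf (σ : ℝ) : Continuous (fun z => gpdf 0 σ z) := by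
  unfold gpdf
  fun_prop

lemma continuous_aE (q σ : ℝ) (hσ : 0 < σ) : Continuous (aE q σ) := by
  unfold aE
  have h : (2 : ℝ) * σ ^ 2 ≠ 0 := by positivity
  fun_prop

noncomputable def Ff (q σ : ℝ) (t : ℕ) (z : ℝ) : ℝ := gpdf 0 σ z / aE q σ z ^ t
noncomputable def Gf (q σ : ℝ) (t : ℕ) (z : ℝ) : ℝ := aE q σ z ^ (t + 1) * gpdf 0 σ z

lemma exp_pow_eq (σ : ℝ) (hσ : 0 < σ) (n : ℕ) (z : ℝ) :
    Real.exp ((2 * z - 1) / (2 * σ ^ 2)) ^ n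
      = Real.exp ((n : ℝ) * (2 * z - 1) / (2 * σ ^ 2)) := by
  rw [← Real.exp_nat_mul]
  congr 1
  ring

lemma exp_inv_pow_eq (σ : ℝ) (hσ : 0 < σ) (n : ℕ) (z : ℝ) :
    (Real.exp ((2 * z - 1) / (2 * σ ^ 2)))⁻¹ ^ n
      = Real.exp ((-(n : ℝ)) * (2 * z - 1) / (2 * σ ^ 2)) := by
  rw [← Real.exp_neg, ← Real.exp_nat_mul]
  congr 1
  ring

lemma continuous_Ff (q σ : ℝ) (hσ : 0 < σ) (hq0 : 0 < q) (hq1 : q ≤ 1) (t : ℕ) :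
    Continuous (Ff q σ t) := by
  unfold Ff
  exact (continuous_gpdf σ).div ((continuous_aE q σ hσ).pow t)
    (fun z => pow_ne_zero t (aE_pos q σ z hq0 hq1).ne')

lemma integrable_Ff (q σ : ℝ) (hσ : 0 < σ) (hq0 : 0 < q) (hq1 : q ≤ 1) (t : ℕ) :
    Integrable (Ff q σ t) := by
  apply Integrable.mono' (((integrable_exp_lin_gpdf σ hσ (-(t : ℝ))).const_mul (q⁻¹ ^ t)))
    (continuous_Ff q σ hσ hq0 hq1 t).aestronglyMeasurable
  filter_upwards with z
  set Ez := Real.exp ((2 * z - 1) / (2 * σ ^ 2)) with hEz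
  have hEpos : 0 < Ez := Real.exp_pos _
  have hg := gpdf_pos 0 σ z hσ
  have ha : 0 < aE q σ z := aE_pos q σ z hq0 hq1
  have haq : q * Ez ≤ aE q σ z := by unfold aE; nlinarith
  have hqE : 0 < q * Ez := by positivity
  have hpow : (q * Ez) ^ t ≤ aE q σ z ^ t := pow_le_pow_left₀ hqE.le haq t
  have hFf : Ff q σ t z ≤ q⁻¹ ^ t * (Ez⁻¹ ^ t * gpdf 0 σ z) := by
    unfold Ff
    rw [div_le_iff₀ (pow_pos ha t)]
    have e : q⁻¹ ^ t * (Ez⁻¹ ^ t * gpdf 0 σ z) * ((q * Ez) ^ t) = gpdf 0 σ z := by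
      rw [mul_pow]
      field_simp
      rw [← mul_pow, ← mul_pow, ← mul_pow,
        show 1 / q * (1 / Ez) * q * Ez = 1 by field_simp [hq0.ne', hEpos.ne'], one_pow]
    calc gpdf 0 σ z = q⁻¹ ^ t * (Ez⁻¹ ^ t * gpdf 0 σ z) * ((q * Ez) ^ t) := e.symm
      _ ≤ q⁻¹ ^ t * (Ez⁻¹ ^ t * gpdf 0 σ z) * aE q σ z ^ t := by
          apply mul_le_mul_of_nonneg_left hpow
          positivity
  have hnn : 0 ≤ Ff q σ t z := by unfold Ff; positivity
  rw [Real.norm_eq_abs, abs_of_nonneg hnn]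
  calc Ff q σ t z ≤ q⁻¹ ^ t * (Ez⁻¹ ^ t * gpdf 0 σ z) := hFf
    _ = q⁻¹ ^ t * (Real.exp ((-(t : ℝ)) * (2 * z - 1) / (2 * σ ^ 2)) * gpdf 0 σ z) := by
        rw [hEz, exp_inv_pow_eq σ hσ t z]

lemma continuous_Gf (q σ : ℝ) (hσ : 0 < σ) (t : ℕ) : Continuous (Gf q σ t) := by
  unfold Gf
  exact ((continuous_aE q σ hσ).pow (t + 1)).mul (continuous_gpdf σ)

lemma integrable_Gf (q σ : ℝ) (hσ : 0 < σ) (hq0 : 0 < q) (hq1 : q ≤ 1) (t : ℕ) :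
    Integrable (Gf q σ t) := by
  apply Integrable.mono'
    (((integrable_gpdf σ hσ).const_mul ((2:ℝ) ^ (t+1))).add
      ((integrable_exp_lin_gpdf σ hσ ((t:ℝ)+1)).const_mul ((2:ℝ) ^ (t+1))))
    (continuous_Gf q σ hσ t).aestronglyMeasurable
  filter_upwards with z
  set Ez := Real.exp ((2 * z - 1) / (2 * σ ^ 2)) with hEz
  have hEpos : 0 < Ez := Real.exp_pos _
  have hg := gpdf_pos 0 σ z hσ
  have ha : 0 < aE q σ z := aE_pos q σ z hq0 hq1
  have hnn : 0 ≤ Gf q σ t z := by unfold Gf; positivity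
  rw [Real.norm_eq_abs, abs_of_nonneg hnn]
  have hE1 : Ez ^ (t+1) = Real.exp (((t:ℝ)+1) * (2 * z - 1) / (2 * σ ^ 2)) := by
    rw [hEz, exp_pow_eq σ hσ (t+1) z]; push_cast; ring_nf
  have hbound : aE q σ z ≤ 1 + Ez := by
    unfold aE
    nlinarith
  have h2 : aE q σ z ^ (t+1) ≤ (1 + Ez) ^ (t+1) := pow_le_pow_left₀ ha.le hbound (t+1)
  have key : (1 + Ez) ^ (t+1) ≤ 2 ^ (t+1) + 2 ^ (t+1) * Ez ^ (t+1) := by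
    rcases le_total Ez 1 with h | h
    · have : (1 + Ez) ^ (t+1) ≤ (2:ℝ) ^ (t+1) := pow_le_pow_left₀ (by positivity) (by linarith) _
      nlinarith [pow_pos hEpos (t+1), pow_pos (show (0:ℝ) < 2 by norm_num) (t+1)]
    · have : (1 + Ez) ^ (t+1) ≤ (2 * Ez) ^ (t+1) := pow_le_pow_left₀ (by positivity) (by linarith) _
      rw [mul_pow] at this
      nlinarith [pow_pos (show (0:ℝ) < 2 by norm_num) (t+1)]
  calc Gf q σ t z = aE q σ z ^ (t+1) * gpdf 0 σ z := rfl
    _ ≤ (2 ^ (t+1) + 2 ^ (t+1) * Ez ^ (t+1)) * gpdf 0 σ z := by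
        apply mul_le_mul_of_nonneg_right _ hg.le
        exact h2.trans key
    _ = 2 ^ (t+1) * gpdf 0 σ z
        + 2 ^ (t+1) * (Real.exp (((t:ℝ)+1) * (2 * z - 1) / (2 * σ ^ 2)) * gpdf 0 σ z) := by
        rw [← hE1]; ring

lemma pointwise_key (q σ z : ℝ) (hσ : 0 < σ) (hq0 : 0 < q) (hq1 : q ≤ 1) (t : ℕ) :
    Ff q σ t z + Ff q σ t (1 - z) ≤ Gf q σ t z + Gf q σ t (1 - z) := by
  set Ez := Real.exp ((2 * z - 1) / (2 * σ ^ 2)) with hEz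
  have hEpos : 0 < Ez := Real.exp_pos _
  have hg : 0 < gpdf 0 σ z := gpdf_pos 0 σ z hσ
  have hP : 0 < aE q σ z := aE_pos q σ z hq0 hq1
  have hQ : 0 < aE q σ (1 - z) := aE_pos q σ (1 - z) hq0 hq1
  set P := aE q σ z with hPdef
  set Q := aE q σ (1 - z) with hQdef
  have hQe : Q = (1 - q) + q * Ez⁻¹ := by rw [hQdef, aE_reflect]
  have hPe : P = (1 - q) + q * Ez := by rw [hPdef]; rfl
  have hgrefl : gpdf 0 σ (1 - z) = Ez * gpdf 0 σ z := gpdf_reflect σ z hσ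
  have hPQ : 1 ≤ P * Q := by
    have e : P * Q = 1 + q * (1 - q) * (Ez - 1) ^ 2 * Ez⁻¹ := by
      rw [hPe, hQe]
      field_simp
      ring
    nlinarith [mul_nonneg (mul_nonneg (mul_nonneg hq0.le (sub_nonneg.mpr hq1))
      (sq_nonneg (Ez - 1))) (inv_pos.mpr hEpos).le]
  have hrel : P + Ez * Q = 1 + Ez := by
    rw [hPe, hQe]
    field_simp
    ring
  have key := pow_key P Q Ez hP hQ hEpos hPQ hrel t
  have key2 := mul_le_mul_of_nonneg_left key hg.le
  have eL : gpdf 0 σ z * (P⁻¹ ^ t + Ez * Q⁻¹ ^ t) = Ff q σ t z + Ff q σ t (1 - z) := by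
    unfold Ff
    rw [hgrefl, ← hPdef, ← hQdef, div_eq_mul_inv, div_eq_mul_inv, ← inv_pow, ← inv_pow]
    ring
  have eR : gpdf 0 σ z * (P ^ (t + 1) + Ez * Q ^ (t + 1)) = Gf q σ t z + Gf q σ t (1 - z) := by
    unfold Gf
    rw [hgrefl, ← hPdef, ← hQdef]
    ring
  rw [eL, eR] at key2
  exact key2

/-- For `q ∈ (0,1]`, `σ > 0`, integer `α ≥ 2`, with `μ₀ = N(0,σ²)` and mixture
`μ = (1-q)N(0,σ²) + qN(1,σ²)`, the two moments
`A_α = E_{z∼μ₀}[(μ(z)/μ₀(z))^α]` and `B_α = E_{z∼μ}[(μ₀(z)/μ(z))^α]`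
satisfy `A_α ≥ B_α` (so `max(A_α, B_α) = A_α`). -/
theorem sgm_A_ge_B (σ q : ℝ) (hσ : 0 < σ) (hq0 : 0 < q) (hq1 : q ≤ 1)
    (α : ℕ) (hα : 2 ≤ α) :
    (∫ z : ℝ, (gpdf 0 σ z / mixpdf q σ z) ^ α * mixpdf q σ z)
      ≤ ∫ z : ℝ, (mixpdf q σ z / gpdf 0 σ z) ^ α * gpdf 0 σ z := by
  obtain ⟨t, rfl⟩ : ∃ t, α = t + 1 := ⟨α - 1, by omega⟩
  have e1 : ∀ z, (gpdf 0 σ z / mixpdf q σ z) ^ (t + 1) * mixpdf q σ z = Ff q σ t z := by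
    intro z
    have hg : 0 < gpdf 0 σ z := gpdf_pos 0 σ z hσ
    have ha : 0 < aE q σ z := aE_pos q σ z hq0 hq1
    rw [mixpdf_eq q σ z hσ]
    unfold Ff
    rw [show gpdf 0 σ z / (aE q σ z * gpdf 0 σ z) = (aE q σ z)⁻¹ by
      rw [mul_comm]; field_simp]
    rw [inv_pow, pow_succ, eq_div_iff (pow_ne_zero t ha.ne')]
    field_simp
  have e2 : ∀ z, (mixpdf q σ z / gpdf 0 σ z) ^ (t + 1) * gpdf 0 σ z = Gf q σ t z := by
    intro z
    have hg : 0 < gpdf 0 σ z := gpdf_pos 0 σ z hσ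
    rw [mixpdf_eq q σ z hσ]
    unfold Gf
    rw [mul_div_assoc, div_self hg.ne', mul_one]
  simp only [e1, e2]
  have hFi := integrable_Ff q σ hσ hq0 hq1 t
  have hGi := integrable_Gf q σ hσ hq0 hq1 t
  have hFi' : Integrable (fun z => Ff q σ t (1 - z)) := hFi.comp_sub_left 1
  have hGi' : Integrable (fun z => Gf q σ t (1 - z)) := hGi.comp_sub_left 1
  have hrefF : (∫ z, Ff q σ t (1 - z)) = ∫ z, Ff q σ t z :=
    integral_sub_left_eq_self (Ff q σ t) volume 1
  have hrefG : (∫ z, Gf q σ t (1 - z)) = ∫ z, Gf q σ t z :=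
    integral_sub_left_eq_self (Gf q σ t) volume 1
  have key : (∫ z, (Ff q σ t z + Ff q σ t (1 - z)))
      ≤ ∫ z, (Gf q σ t z + Gf q σ t (1 - z)) := by
    apply integral_mono (hFi.add hFi') (hGi.add hGi')
    intro z
    exact pointwise_key q σ z hσ hq0 hq1 t
  rw [integral_add hFi hFi', integral_add hGi hGi', hrefF, hrefG] at key
  linarith
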